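/- Let G be a tournament of size n ≡ 3 (mod 4) with Seidel matrix S. Then G is doubly regular if and only if S has exactly three distinct eigenvalues √n, 0, -√n and S·𝟏 = 0 (equivalently, the eigenvalue 0 has all-ones eigenvector and the main angles of ±√n are zero). -/

import Mathlib

open Matrix Polynomial

noncomputable section

def IsTournament {n : ℕ} (A : Matrix (Fin n) (Fin n) ℝ) : Prop :=
  (∀ i j, A i j = 0 ∨ A i j = 1) ∧ (∀ i, A i i = 0) ∧
    A + Aᵀ = (Matrix.of fun _ _ => (1:ℝ)) - 1

def Seidel {n : ℕ} (A : Matrix (Fin n) (Fin n) ℝ) : Matrix (Fin n) (Fin n) ℂ :=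
  Complex.I • ((A - Aᵀ).map Complex.ofReal)

def IsDoublyRegular {n : ℕ} (A : Matrix (Fin n) (Fin n) ℝ) : Prop :=
  A.mulVec (fun _ => 1) = (fun _ => ((n : ℝ) - 1) / 2) ∧
  A * Aᵀ = (((n : ℝ) + 1) / 4) • 1 + (((n : ℝ) - 3) / 4) • Matrix.of fun _ _ => 1




variable {n : ℕ} (A : Matrix (Fin n) (Fin n) ℝ)

local notation "J" => (Matrix.of fun _ _ => (1:ℝ) : Matrix (Fin n) (Fin n) ℝ)

lemma JJ : J * J = (n:ℝ) • J := by
  ext i j; simp [Matrix.mul_apply]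

lemma rowsum_mul {c : ℝ} (h : A.mulVec (fun _ => 1) = fun _ => c) : A * J = c • J := by
  ext i j
  have := congr_fun h i
  simp only [Matrix.mulVec, dotProduct, mul_one] at this
  simp [Matrix.mul_apply, this]

lemma colsum_mul {c : ℝ} (h : Aᵀ.mulVec (fun _ => 1) = fun _ => c) : J * A = c • J := by
  ext i j
  have := congr_fun h j
  simp only [Matrix.mulVec, dotProduct, mul_one, Matrix.transpose_apply] at this
  simp [Matrix.mul_apply, this]

lemma tour_rowsums (hA : IsTournament A) (hDR1 : A.mulVec (fun _ => 1) = (fun _ => ((n : ℝ) - 1) / 2)) :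
    Aᵀ.mulVec (fun _ => 1) = (fun _ => ((n : ℝ) - 1) / 2) := by
  have h : (A + Aᵀ).mulVec (fun _ => (1:ℝ)) = (((Matrix.of fun _ _ => (1:ℝ)) : Matrix (Fin n) (Fin n) ℝ) - 1).mulVec (fun _ => (1:ℝ)) := by rw [hA.2.2]
  simp only [Matrix.add_mulVec, Matrix.sub_mulVec, hDR1] at h
  funext i
  have := congr_fun h i
  simp only [Pi.add_apply, Pi.sub_apply] at this
  have hJ1 : ((Matrix.of fun _ _ => (1:ℝ)) : Matrix (Fin n) (Fin n) ℝ).mulVec (fun _ => (1:ℝ)) i = (n:ℝ) := by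
    simp [Matrix.mulVec, dotProduct]
  have h11 : (1 : Matrix (Fin n) (Fin n) ℝ).mulVec (fun _ => (1:ℝ)) i = 1 := by
    simp [Matrix.mulVec_one]
  rw [hJ1, h11] at this
  linarith

lemma tour_transpose (hA : IsTournament A) : Aᵀ = J - 1 - A := by
  have h := hA.2.2
  have h2 : A + Aᵀ - A = J - 1 - A := by rw [h]
  calc Aᵀ = A + Aᵀ - A := by abel
  _ = J - 1 - A := h2

lemma claim_eq (hA : IsTournament A) :
    (A - Aᵀ)*(A - Aᵀ) + (A*Aᵀ + A*Aᵀ + A*Aᵀ + A*Aᵀ) + (J*A + J*A) + (J + J) =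
      (A*J + A*J) + J*J + 1 := by
  rw [tour_transpose A hA]; noncomm_ring

lemma real_forward (hA : IsTournament A) (hDR : IsDoublyRegular A) :
    (A - Aᵀ) * (A - Aᵀ) = J - (n:ℝ) • 1 ∧ (A - Aᵀ).mulVec (fun _ => 1) = 0 := by
  have hcol := tour_rowsums A hA hDR.1
  have hr : A * J = (((n:ℝ)-1)/2) • J := rowsum_mul A hDR.1
  have hJA : J * A = (((n:ℝ)-1)/2) • J := colsum_mul A hcol
  have hJJ' := JJ (n := n)
  have hAAt : A * Aᵀ = (((n : ℝ) + 1) / 4) • 1 + (((n : ℝ) - 3) / 4) • J := hDR.2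
  constructor
  · have c := claim_eq A hA
    rw [hAAt, hr, hJA, hJJ'] at c
    linear_combination (norm := module) c
  · rw [Matrix.sub_mulVec, hDR.1, hcol, sub_self]

lemma real_converse (hA : IsTournament A)
    (h1 : (A - Aᵀ).mulVec (fun _ => 1) = 0)
    (h2 : (A - Aᵀ) * (A - Aᵀ) = J - (n:ℝ) • 1) : IsDoublyRegular A := by
  have hrow : A.mulVec (fun _ => 1) = (fun _ => ((n : ℝ) - 1) / 2) := by
    have hsum : (A + Aᵀ).mulVec (fun _ => (1:ℝ)) = (J - 1).mulVec (fun _ => (1:ℝ)) := by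
      rw [hA.2.2]
    funext i
    have e1 := congr_fun hsum i
    have e2 := congr_fun h1 i
    simp only [Matrix.add_mulVec, Matrix.sub_mulVec, Pi.add_apply, Pi.sub_apply,
      Pi.zero_apply] at e1 e2
    have hJ1 : (J).mulVec (fun _ => (1:ℝ)) i = (n:ℝ) := by
      simp [Matrix.mulVec, dotProduct]
    have h11 : (1 : Matrix (Fin n) (Fin n) ℝ).mulVec (fun _ => (1:ℝ)) i = 1 := by
      simp [Matrix.mulVec_one]
    rw [hJ1, h11] at e1
    linarith
  refine ⟨hrow, ?_⟩
  have hcol := tour_rowsums A hA hrow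
  have hr : A * J = (((n:ℝ)-1)/2) • J := rowsum_mul A hrow
  have hJA : J * A = (((n:ℝ)-1)/2) • J := colsum_mul A hcol
  have hJJ' := JJ (n := n)
  have c := claim_eq A hA
  rw [h2, hr, hJA, hJJ'] at c
  show A * Aᵀ = (((n : ℝ) + 1) / 4) • 1 + (((n : ℝ) - 3) / 4) • J
  have h4 : (4:ℝ) • (A * Aᵀ) = ((n:ℝ)+1) • 1 + ((n:ℝ)-3) • J := by
    linear_combination (norm := module) c
  calc A * Aᵀ = (4:ℝ)⁻¹ • ((4:ℝ) • (A * Aᵀ)) := by rw [smul_smul]; norm_num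
  _ = (4:ℝ)⁻¹ • (((n:ℝ)+1) • 1 + ((n:ℝ)-3) • J) := by rw [h4]
  _ = (((n : ℝ) + 1) / 4) • 1 + (((n : ℝ) - 3) / 4) • J := by module

-- ## Complex side

local notation "Jc" => (Matrix.of fun _ _ => (1:ℂ) : Matrix (Fin n) (Fin n) ℂ)

lemma map_ofReal_mul (M N : Matrix (Fin n) (Fin n) ℝ) :
    (M * N).map Complex.ofReal = M.map Complex.ofReal * N.map Complex.ofReal := by
  ext i j
  simp [Matrix.mul_apply, Matrix.map_apply]

lemma seidel_sq : Seidel A * Seidel A = -(((A - Aᵀ) * (A - Aᵀ)).map Complex.ofReal) := by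
  unfold Seidel
  rw [smul_mul_smul_comm, Complex.I_mul_I, map_ofReal_mul, neg_smul, one_smul]

lemma seidel_entry (i j : Fin n) : Seidel A i j = Complex.I * ((A i j - A j i : ℝ) : ℂ) := by
  simp [Seidel, Matrix.map_apply]

lemma seidel_mulvec_entry (i : Fin n) :
    (Seidel A).mulVec (fun _ => 1) i = Complex.I * (((A - Aᵀ).mulVec (fun _ => 1) i : ℝ) : ℂ) := by
  simp only [Matrix.mulVec, dotProduct, mul_one, Seidel, Matrix.smul_apply, Matrix.map_apply,
    smul_eq_mul]
  rw [← Finset.mul_sum]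
  norm_cast

lemma seidel_mulvec_zero_iff :
    (Seidel A).mulVec (fun _ => 1) = 0 ↔ (A - Aᵀ).mulVec (fun _ => 1) = 0 := by
  constructor <;> intro h <;> funext i
  · have := congr_fun h i
    rw [seidel_mulvec_entry] at this
    simp only [Pi.zero_apply, mul_eq_zero, Complex.I_ne_zero, false_or,
      Complex.ofReal_eq_zero] at this
    exact this
  · rw [seidel_mulvec_entry, congr_fun h i]
    simp

lemma seidel_herm : (Seidel A).IsHermitian := by
  ext i j
  simp only [Matrix.conjTranspose_apply, seidel_entry, star_mul', Complex.star_def,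
    Complex.conj_I, Complex.conj_ofReal]
  push_cast
  ring

lemma trace_seidel : trace (Seidel A) = 0 := by
  unfold trace
  apply Finset.sum_eq_zero
  intro i _
  simp [Matrix.diag, seidel_entry]

lemma tour_offdiag_sq (hA : IsTournament A) {i k : Fin n} (h : i ≠ k) :
    (A i k - A k i) ^ 2 = 1 := by
  have he : A i k + A k i = 1 := by
    have := congr_fun (congr_fun hA.2.2 i) k
    simp only [Matrix.add_apply, Matrix.transpose_apply, Matrix.sub_apply, Matrix.of_apply,
      Matrix.one_apply, if_neg h] at this
    linarith
  rcases hA.1 i k with h1 | h1 <;> rcases hA.1 k i with h2 | h2 <;>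
    rw [h1, h2] <;> [skip; skip; skip; skip] <;> first | (exfalso; linarith) | norm_num

lemma trace_seidel_sq (hA : IsTournament A) (hn : 1 ≤ n) :
    trace (Seidel A * Seidel A) = (n : ℂ) * ((n : ℂ) - 1) := by
  have hdiag : ∀ i, (Seidel A * Seidel A) i i = ((n : ℂ) - 1) := by
    intro i
    rw [Matrix.mul_apply]
    have : ∀ k ∈ Finset.univ, Seidel A i k * Seidel A k i = (((A i k - A k i) ^ 2 : ℝ) : ℂ) := by
      intro k _
      rw [seidel_entry, seidel_entry]
      push_cast
      rw [show (Complex.I * (↑(A i k) - ↑(A k i))) * (Complex.I * (↑(A k i) - ↑(A i k)))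
        = -(Complex.I^2) * ((A i k : ℂ) - A k i)^2 by ring, Complex.I_sq]
      ring
    rw [Finset.sum_congr rfl this, ← Complex.ofReal_sum]
    norm_cast
    rw [← Finset.sum_erase_add _ _ (Finset.mem_univ i)]
    have h0 : (A i i - A i i) ^ 2 = 0 := by ring
    rw [h0, add_zero]
    rw [Finset.sum_congr rfl (fun k hk => tour_offdiag_sq A hA (Finset.ne_of_mem_erase hk).symm)]
    rw [Finset.sum_const, Finset.card_erase_of_mem (Finset.mem_univ i), Finset.card_univ,
      Fintype.card_fin]
    simp only [nsmul_eq_mul, mul_one]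
  unfold trace
  rw [show ∀ M : Matrix (Fin n) (Fin n) ℂ, ∑ i, M.diag i = ∑ i, M i i from fun _ => rfl]
  rw [Finset.sum_congr rfl (fun i _ => hdiag i), Finset.sum_const, Finset.card_univ,
    Fintype.card_fin, nsmul_eq_mul]

-- ## Spectrum helpers
lemma eig_mem (S : Matrix (Fin n) (Fin n) ℂ) (v : Fin n → ℂ) (μ : ℂ)
    (hv : v ≠ 0) (h : S.mulVec v = μ • v) : μ ∈ spectrum ℂ S := by
  rw [spectrum.mem_iff, Matrix.isUnit_iff_isUnit_det, isUnit_iff_ne_zero, not_not,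
    ← Matrix.exists_mulVec_eq_zero_iff]
  refine ⟨v, hv, ?_⟩
  have e : (algebraMap ℂ (Matrix (Fin n) (Fin n) ℂ)) μ = μ • (1 : Matrix (Fin n) (Fin n) ℂ) := by
    simp [Algebra.algebraMap_eq_smul_one]
  rw [Matrix.sub_mulVec, e, Matrix.smul_mulVec, Matrix.one_mulVec, h, sub_self]

lemma mem_eig (S : Matrix (Fin n) (Fin n) ℂ) (μ : ℂ) (h : μ ∈ spectrum ℂ S) :
    ∃ v, v ≠ 0 ∧ S.mulVec v = μ • v := by
  rw [spectrum.mem_iff, Matrix.isUnit_iff_isUnit_det, isUnit_iff_ne_zero, not_not,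
    ← Matrix.exists_mulVec_eq_zero_iff] at h
  obtain ⟨v, hv, hv2⟩ := h
  refine ⟨v, hv, ?_⟩
  have e : (algebraMap ℂ (Matrix (Fin n) (Fin n) ℂ)) μ = μ • (1 : Matrix (Fin n) (Fin n) ℂ) := by
    simp [Algebra.algebraMap_eq_smul_one]
  rw [Matrix.sub_mulVec, e, Matrix.smul_mulVec, Matrix.one_mulVec, sub_eq_zero] at hv2
  exact hv2.symm

lemma sqrtn_sq (n : ℕ) : ((Real.sqrt n : ℂ)) * ((Real.sqrt n : ℂ)) = (n : ℂ) := by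
  norm_cast
  exact Real.mul_self_sqrt n.cast_nonneg

lemma mulJc_of_mulvec (S : Matrix (Fin n) (Fin n) ℂ) (h : S.mulVec (fun _ => 1) = 0) :
    S * Jc = 0 := by
  ext i j
  have := congr_fun h i
  simp only [Matrix.mulVec, dotProduct, mul_one, Pi.zero_apply] at this
  simp [Matrix.mul_apply, this]

lemma Jcmul_of_mulvec (S : Matrix (Fin n) (Fin n) ℂ) (hH : S.IsHermitian)
    (h : S.mulVec (fun _ => 1) = 0) : Jc * S = 0 := by
  ext i j
  have hj := congr_fun h j
  simp only [Matrix.mulVec, dotProduct, mul_one, Pi.zero_apply] at hj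
  have : ∀ k, S k j = (starRingEnd ℂ) (S j k) := by
    intro k
    calc S k j = Sᴴ k j := by rw [hH.eq]
    _ = (starRingEnd ℂ) (S j k) := Matrix.conjTranspose_apply S j k
  simp only [Matrix.mul_apply, Matrix.of_apply, one_mul, Matrix.zero_apply]
  rw [Finset.sum_congr rfl (fun k _ => this k), ← map_sum, hj, map_zero]

lemma JcJc : Jc * Jc = (n : ℂ) • Jc := by
  ext i j; simp [Matrix.mul_apply]

lemma trace_Jc : trace (Jc : Matrix (Fin n) (Fin n) ℂ) = (n : ℂ) := by
  unfold trace
  simp [Matrix.diag]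

lemma nsq_ne (hn : 3 ≤ n) : (n : ℂ) * ((n : ℂ) - 1) ≠ 0 := by
  have h1 : (n : ℂ) ≠ 0 := by
    norm_cast; omega
  have h2 : (n : ℂ) - 1 ≠ 0 := by
    intro h
    have : (n : ℂ) = 1 := by linear_combination h
    norm_cast at this; omega
  exact mul_ne_zero h1 h2

lemma spectrum_three (hn : 3 ≤ n) (S : Matrix (Fin n) (Fin n) ℂ)
    (hS2 : S * S = (n : ℂ) • 1 - Jc) (hS1 : S.mulVec (fun _ => 1) = 0)
    (htr : trace S = 0) :
    spectrum ℂ S = {(Real.sqrt n : ℂ), 0, -(Real.sqrt n : ℂ)} := by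
  set s : ℂ := (Real.sqrt n : ℂ) with hs
  have hs2 : s * s = (n : ℂ) := sqrtn_sq n
  have hSJ : S * Jc = 0 := mulJc_of_mulvec S hS1
  have hS3 : S * S * S = (n : ℂ) • S := by
    rw [mul_assoc, hS2]
    rw [mul_sub, mul_smul_comm, mul_one, hSJ, sub_zero]
  have htr2 : trace (S * S) = (n : ℂ) * ((n : ℂ) - 1) := by
    rw [hS2, Matrix.trace_sub, Matrix.trace_smul, Matrix.trace_one, trace_Jc]
    simp [Fintype.card_fin]
    ring
  ext μ
  simp only [Set.mem_insert_iff, Set.mem_singleton_iff]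
  constructor
  · intro hμ
    obtain ⟨v, hv, hveq⟩ := mem_eig S μ hμ
    have h3 : (S * S * S).mulVec v = (μ * μ * μ) • v := by
      have e1 : S.mulVec (μ • v) = (μ * μ) • v := by
        rw [Matrix.mulVec_smul, hveq, smul_smul]
      have e2 : S.mulVec ((μ * μ) • v) = (μ * μ * μ) • v := by
        rw [Matrix.mulVec_smul, hveq, smul_smul, mul_assoc]
      rw [← Matrix.mulVec_mulVec, ← Matrix.mulVec_mulVec, hveq, e1, e2]
    have h4 : ((μ * μ * μ) - (n : ℂ) * μ) • v = 0 := by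
      rw [sub_smul, ← h3, hS3, Matrix.smul_mulVec, hveq, smul_smul, sub_self]
    obtain ⟨i, hi⟩ : ∃ i, v i ≠ 0 := by
      by_contra hc
      push_neg at hc
      exact hv (funext hc)
    have hc0 : (μ * μ * μ) - (n : ℂ) * μ = 0 := by
      have := congr_fun h4 i
      simp only [Pi.smul_apply, smul_eq_mul, Pi.zero_apply, mul_eq_zero] at this
      tauto
    have hfact : μ * (μ - s) * (μ + s) = 0 := by
      linear_combination hc0 - μ * hs2
    rcases mul_eq_zero.mp hfact with h | h
    · rcases mul_eq_zero.mp h with h | h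
      · right; left; exact h
      · left; exact sub_eq_zero.mp h
    · right; right
      exact eq_neg_of_add_eq_zero_left h
  · intro hμ
    have hC : ∀ μ : ℂ, (algebraMap ℂ (Matrix (Fin n) (Fin n) ℂ)) μ = μ • 1 := fun μ => by
      simp [Algebra.algebraMap_eq_smul_one]
    rcases hμ with h | h | h
    · -- μ = √n
      subst h
      rw [spectrum.mem_iff, hC]
      intro hunit
      have key : (S * (S + s • 1)) * (s • 1 - S) = 0 := by
        have e : (S + s • 1) * (s • 1 - S) = (n : ℂ) • 1 - S * S := by
          simp only [add_mul, mul_sub, Matrix.mul_smul, Matrix.smul_mul, one_mul, mul_one,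
            smul_smul, hs2]
          abel
        rw [mul_assoc, e, hS2, sub_sub_cancel]
        exact hSJ
      have hz : S * (S + s • 1) = 0 := hunit.mul_right_cancel (by rw [key, zero_mul])
      have htz : trace (S * (S + s • 1)) = (n : ℂ) * ((n : ℂ) - 1) := by
        rw [mul_add, Matrix.mul_smul, mul_one, Matrix.trace_add, Matrix.trace_smul, htr,
          smul_zero, add_zero, htr2]
      rw [hz, Matrix.trace_zero] at htz
      exact nsq_ne hn htz.symm
    · -- μ = 0
      subst h
      refine eig_mem S (fun _ => 1) 0 ?_ (by rw [hS1, zero_smul])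
      intro hz
      have : (1 : ℂ) = 0 := congr_fun hz ⟨0, by omega⟩
      simp at this
    · -- μ = -√n
      subst h
      rw [spectrum.mem_iff, hC]
      intro hunit
      have hunit' : IsUnit (S + s • 1) := by
        have : (-s) • (1 : Matrix (Fin n) (Fin n) ℂ) - S = -(S + s • 1) := by
          rw [neg_smul]; abel
        rw [this] at hunit
        simpa using hunit.neg
      have key : (S * (S - s • 1)) * (S + s • 1) = 0 := by
        have e : (S - s • 1) * (S + s • 1) = S * S - (n : ℂ) • 1 := by
          simp only [sub_mul, mul_add, Matrix.mul_smul, Matrix.smul_mul, one_mul, mul_one,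
            smul_smul, hs2]
          abel
        rw [mul_assoc, e, hS2, sub_sub_cancel_left]
        rw [Matrix.mul_neg, hSJ, neg_zero]
      have hz : S * (S - s • 1) = 0 := hunit'.mul_right_cancel (by rw [key, zero_mul])
      have htz : trace (S * (S - s • 1)) = (n : ℂ) * ((n : ℂ) - 1) := by
        rw [mul_sub, Matrix.mul_smul, mul_one, Matrix.trace_sub, Matrix.trace_smul, htr,
          smul_zero, sub_zero, htr2]
      rw [hz, Matrix.trace_zero] at htz
      exact nsq_ne hn htz.symm

-- ## Converse: spectrum → S³ = nS
lemma S3_of_spectrum (S : Matrix (Fin n) (Fin n) ℂ) (hH : S.IsHermitian)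
    (hspec : spectrum ℂ S = {(Real.sqrt n : ℂ), 0, -(Real.sqrt n : ℂ)}) :
    S * S * S = (n : ℂ) • S := by
  set s : ℂ := (Real.sqrt n : ℂ) with hs
  have hs2 : s * s = (n : ℂ) := sqrtn_sq n
  set d := hH.eigenvalues with hd
  have hd3 : ∀ i, ((d i : ℂ)) * (d i : ℂ) * (d i : ℂ) = (n : ℂ) * (d i : ℂ) := by
    intro i
    have hvne : (⇑(hH.eigenvectorBasis i) : Fin n → ℂ) ≠ 0 := by
      intro hz
      refine hH.eigenvectorBasis.orthonormal.ne_zero i ?_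
      ext x
      exact congr_fun hz x
    have hmem : ((d i : ℂ)) ∈ spectrum ℂ S := by
      refine eig_mem S _ _ hvne ?_
      rw [hH.mulVec_eigenvectorBasis]
      ext x
      simp [Complex.real_smul, hd]
    rw [hspec] at hmem
    simp only [Set.mem_insert_iff, Set.mem_singleton_iff] at hmem
    rcases hmem with h | h | h
    · rw [h]; linear_combination s * hs2
    · rw [h]; ring
    · rw [h]; linear_combination (-s) * hs2
  have hU2 := (Matrix.mem_unitaryGroup_iff').mp (hH.eigenvectorUnitary).2
  set U : Matrix (Fin n) (Fin n) ℂ := (hH.eigenvectorUnitary : Matrix (Fin n) (Fin n) ℂ) with hU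
  set D : Matrix (Fin n) (Fin n) ℂ := Matrix.diagonal (RCLike.ofReal ∘ d) with hD
  have cancel : ∀ M : Matrix (Fin n) (Fin n) ℂ, M * star U * U = M := by
    intro M
    rw [mul_assoc, hU2, mul_one]
  have hD3 : D * D * D = (n : ℂ) • D := by
    rw [hD, Matrix.diagonal_mul_diagonal, Matrix.diagonal_mul_diagonal]
    ext i j
    by_cases h : i = j
    · subst h
      simp only [Matrix.diagonal_apply_eq, Matrix.smul_apply, Function.comp_apply, smul_eq_mul]
      exact hd3 i
    · simp [Matrix.diagonal_apply_ne _ h, h]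
  have hspectral := hH.spectral_theorem
  rw [hspectral]
  calc (U * D * star U) * (U * D * star U) * (U * D * star U)
      = U * (D * D * D) * star U := by
        simp only [← mul_assoc]
        rw [cancel, cancel]
  _ = (n : ℂ) • (U * D * star U) := by
        rw [hD3, Matrix.mul_smul, Matrix.smul_mul]

-- ## Converse: S² = n•1 - J
lemma SS_eq (hn : 3 ≤ n) (S : Matrix (Fin n) (Fin n) ℂ) (hH : S.IsHermitian)
    (hS3 : S * S * S = (n : ℂ) • S) (hS1 : S.mulVec (fun _ => 1) = 0)
    (htrSS : trace (S * S) = (n : ℂ) * ((n : ℂ) - 1)) :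
    S * S = (n : ℂ) • 1 - Jc := by
  have hSJ : S * Jc = 0 := mulJc_of_mulvec S hS1
  have hJS : Jc * S = 0 := Jcmul_of_mulvec S hH hS1
  have hJJ : Jc * Jc = (n : ℂ) • Jc := JcJc
  have hSSJ : (S * S) * Jc = 0 := by rw [mul_assoc, hSJ, mul_zero]
  have hJSS : Jc * (S * S) = 0 := by rw [← mul_assoc, hJS, zero_mul]
  have hS4 : (S * S) * (S * S) = (n : ℂ) • (S * S) := by
    calc (S * S) * (S * S) = (S * S * S) * S := by rw [mul_assoc, mul_assoc, mul_assoc]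
    _ = (n : ℂ) • (S * S) := by rw [hS3, Matrix.smul_mul]
  set X : Matrix (Fin n) (Fin n) ℂ := (n : ℂ) • 1 - S * S - Jc with hX
  have hX2 : X * X = (n : ℂ) • X := by
    rw [hX]
    linear_combination (norm := noncomm_ring) hS4 + hSSJ + hJSS + hJJ
  have hXH : Xᴴ = X := by
    rw [hX]
    rw [Matrix.conjTranspose_sub, Matrix.conjTranspose_sub, Matrix.conjTranspose_smul,
      Matrix.conjTranspose_one, Matrix.conjTranspose_mul, hH.eq]
    congr 1
    · congr 1
      · norm_cast
    · ext i j; simp [Matrix.conjTranspose_apply]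
  have htrX : trace X = 0 := by
    rw [hX, Matrix.trace_sub, Matrix.trace_sub, Matrix.trace_smul, Matrix.trace_one, htrSS,
      trace_Jc]
    simp [Fintype.card_fin]
    ring
  have htrXX : trace (X * X) = 0 := by
    rw [hX2, Matrix.trace_smul, htrX, smul_zero]
  have hXzero : X = 0 := by
    have hsum : ∑ i, ∑ j, (Complex.normSq (X i j) : ℂ) = 0 := by
      rw [← htrXX]
      unfold trace
      rw [show ∀ M : Matrix (Fin n) (Fin n) ℂ, ∑ i, M.diag i = ∑ i, M i i from fun _ => rfl]
      apply Finset.sum_congr rfl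
      intro i _
      rw [Matrix.mul_apply]
      apply Finset.sum_congr rfl
      intro j _
      have : X j i = (starRingEnd ℂ) (X i j) := by
        calc X j i = Xᴴ j i := by rw [hXH]
        _ = (starRingEnd ℂ) (X i j) := Matrix.conjTranspose_apply X i j
      rw [this, Complex.normSq_eq_conj_mul_self]
      ring
    have hsum' : ∑ i, ∑ j, Complex.normSq (X i j) = 0 := by
      have := congr_arg Complex.re hsum
      simpa using this
    ext i j
    have h1 : ∀ i ∈ (Finset.univ : Finset (Fin n)), 0 ≤ ∑ j, Complex.normSq (X i j) :=
      fun i _ => Finset.sum_nonneg (fun j _ => Complex.normSq_nonneg _)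
    have h2 := (Finset.sum_eq_zero_iff_of_nonneg h1).mp hsum' i (Finset.mem_univ i)
    have h3 := (Finset.sum_eq_zero_iff_of_nonneg
      (fun j _ => Complex.normSq_nonneg (X i j))).mp h2 j (Finset.mem_univ j)
    simpa using Complex.normSq_eq_zero.mp h3
  linear_combination (norm := module) -hXzero

lemma map_J_sub :
    (((Matrix.of fun _ _ => (1:ℝ)) : Matrix (Fin n) (Fin n) ℝ) - (n:ℝ) • 1).map Complex.ofReal
      = Jc - (n:ℂ) • 1 := by
  ext i j
  by_cases h : i = j <;>
    simp [Matrix.map_apply, Matrix.one_apply, h]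

theorem doubly_regular_iff_seidel_spectrum {n : ℕ} (hmod : n % 4 = 3)
    (A : Matrix (Fin n) (Fin n) ℝ) (hA : IsTournament A) :
    IsDoublyRegular A ↔
      (spectrum ℂ (Seidel A) = {(Real.sqrt n : ℂ), 0, -(Real.sqrt n : ℂ)} ∧
        (Seidel A).mulVec (fun _ => 1) = 0) := by
  have hn3 : 3 ≤ n := by omega
  constructor
  · intro hDR
    obtain ⟨hM2, hM1⟩ := real_forward A hA hDR
    have hS1 : (Seidel A).mulVec (fun _ => 1) = 0 := (seidel_mulvec_zero_iff A).mpr hM1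
    have hS2 : Seidel A * Seidel A = (n:ℂ) • 1 - (Matrix.of fun _ _ => (1:ℂ)) := by
      rw [seidel_sq, hM2, map_J_sub, neg_sub]
    exact ⟨spectrum_three hn3 (Seidel A) hS2 hS1 (trace_seidel A), hS1⟩
  · rintro ⟨hspec, hS1⟩
    have hH := seidel_herm A
    have hS3 := S3_of_spectrum (Seidel A) hH hspec
    have htrSS := trace_seidel_sq A hA (by omega)
    have hSSeq := SS_eq hn3 (Seidel A) hH hS3 hS1 htrSS
    have hmapeq : ((A - Aᵀ) * (A - Aᵀ)).map Complex.ofReal =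
        (((Matrix.of fun _ _ => (1:ℝ)) : Matrix (Fin n) (Fin n) ℝ) - (n:ℝ) • 1).map
          Complex.ofReal := by
      rw [map_J_sub]
      have hsq := seidel_sq A
      rw [hSSeq] at hsq
      linear_combination (norm := module) hsq
    have hM2 : (A - Aᵀ) * (A - Aᵀ) =
        ((Matrix.of fun _ _ => (1:ℝ)) : Matrix (Fin n) (Fin n) ℝ) - (n:ℝ) • 1 := by
      ext i j
      have := congr_fun (congr_fun hmapeq i) j
      simp only [Matrix.map_apply] at this
      exact_mod_cast this
    exact real_converse A hA ((seidel_mulvec_zero_iff A).mp hS1) hM2
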